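/- arXiv:1108.2477 — 2 statements merged into one kernel-verified Lean document; each statement's English description precedes it below -/
import Mathlib

section
/- Let Θ_n=S_n≡Θ=ℝ^p and let 𝓜_n=(M_n,id) be a non-random Markov chain Monte Carlo procedure where M_n is the Markov measure generated by initial distribution μ_n and transition kernel K_n(x,dy)=A_n(x)R_n(x,dy)+(1−A_n(x))δ_x(dy), with R_n a probability transition kernel on Θ and A_n:Θ→(0,1) measurable. If (μ_n; n=1,2,…) is tight and sup_{x∈K}A_n(x)→0 as n→∞ for every compact set K⊂Θ, then (𝓜_n; n=1,2,…) is degenerate. -/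
open MeasureTheory ProbabilityTheory Filter
open scoped ENNReal Topology

noncomputable section

/-- The bounded Lipschitz distance between two measures on a pseudometric space. -/
def blDist {α : Type*} [MeasurableSpace α] [PseudoMetricSpace α]
    (μ ν : Measure α) : ℝ :=
  ⨆ f : {f : α → ℝ // LipschitzWith 1 f ∧ ∀ x, |f x| ≤ 1},
    |∫ x, f.1 x ∂μ - ∫ x, f.1 x ∂ν|

/-- The empirical measure `m⁻¹ ∑_{i<m} δ_{s(i)}` of the first `m` terms of a sequence. -/
def empMeas {Θ : Type*} [MeasurableSpace Θ] (m : ℕ) (s : ℕ → Θ) : Measure Θ :=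
  (m : ℝ≥0∞)⁻¹ • ∑ i ∈ Finset.range m, Measure.dirac (s i)

/-- `M` is the Markov measure on the path space generated by the initial distribution `μ`
and the transition (kernel) `K`: the first coordinate has law `μ`, and the chain has the
Markov property with one-step transition `K`. -/
def IsMarkovMeasureF {S : Type*} [MeasurableSpace S] (M : Measure (ℕ → S))
    (μ : Measure S) (K : S → Measure S) : Prop :=
  M.map (fun s => s 0) = μ ∧
  ∀ (m : ℕ) (B : Set (Fin (m + 1) → S)), MeasurableSet B →
    ∀ (A : Set S), MeasurableSet A →
      M {s | (fun i : Fin (m + 1) => s i.1) ∈ B ∧ s (m + 1) ∈ A}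
        = ∫⁻ s in {s | (fun i : Fin (m + 1) => s i.1) ∈ B}, K (s m) A ∂M

/-- Tightness of a sequence of measures. -/
def TightSeq {α : Type*} [MeasurableSpace α] [TopologicalSpace α]
    (μ : ℕ → Measure α) : Prop :=
  ∀ ε : ℝ, 0 < ε → ∃ K : Set α, IsCompact K ∧ ∀ n, μ n Kᶜ ≤ ENNReal.ofReal ε

lemma blDist_nonneg {α : Type*} [MeasurableSpace α] [PseudoMetricSpace α]
    (μ ν : Measure α) : 0 ≤ blDist μ ν :=
  Real.iSup_nonneg fun _ => abs_nonneg _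

lemma integral_empMeas {α : Type*} [MeasurableSpace α] {f : α → ℝ}
    (hsm : StronglyMeasurable f) (hb : ∀ x, |f x| ≤ 1) (k : ℕ) (s : ℕ → α) :
    ∫ x, f x ∂(empMeas k s) = (k : ℝ)⁻¹ * ∑ i ∈ Finset.range k, f (s i) := by
  have hint : ∀ i ∈ Finset.range k, Integrable f (Measure.dirac (s i)) := by
    intro i _
    exact (integrable_const (1 : ℝ)).mono' hsm.aestronglyMeasurable
      (Filter.Eventually.of_forall fun x => by simpa [Real.norm_eq_abs] using hb x)
  rw [empMeas, integral_smul_measure, integral_finset_sum_measure hint]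
  simp only [integral_dirac' f _ hsm, smul_eq_mul]
  simp [ENNReal.toReal_inv]

lemma blDist_empMeas_le {α : Type*} [MeasurableSpace α] [PseudoMetricSpace α]
    [OpensMeasurableSpace α] {m : ℕ} (hm : 1 ≤ m) (s : ℕ → α) {c : ℝ} (hc : 0 ≤ c)
    (h : ∀ f : α → ℝ, LipschitzWith 1 f → (∀ x, |f x| ≤ 1) →
        ∀ i < m, |f (s i) - f (s 0)| ≤ c) :
    blDist (empMeas m s) (empMeas 1 s) ≤ c := by
  refine Real.iSup_le (fun f => ?_) hc
  obtain ⟨f, hf1, hf2⟩ := f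
  have hsm : StronglyMeasurable f := hf1.continuous.stronglyMeasurable
  rw [integral_empMeas hsm hf2 m s, integral_empMeas hsm hf2 1 s]
  have hm0 : (0:ℝ) < m := by exact_mod_cast hm
  simp only [Finset.range_one, Finset.sum_singleton, Nat.cast_one, inv_one, one_mul]
  have key : (m : ℝ)⁻¹ * ∑ i ∈ Finset.range m, f (s i) - f (s 0)
      = (m : ℝ)⁻¹ * ∑ i ∈ Finset.range m, (f (s i) - f (s 0)) := by
    rw [Finset.sum_sub_distrib, Finset.sum_const, Finset.card_range, mul_sub]
    have : (m : ℝ)⁻¹ * (m • f (s 0)) = f (s 0) := by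
      rw [nsmul_eq_mul, ← mul_assoc, inv_mul_cancel₀ hm0.ne', one_mul]
    rw [this]
  rw [key, abs_mul, abs_inv, Nat.abs_cast]
  calc (m : ℝ)⁻¹ * |∑ i ∈ Finset.range m, (f (s i) - f (s 0))|
      ≤ (m : ℝ)⁻¹ * ∑ i ∈ Finset.range m, |f (s i) - f (s 0)| := by
        gcongr; exact Finset.abs_sum_le_sum_abs _ _
    _ ≤ (m : ℝ)⁻¹ * ∑ i ∈ Finset.range m, c := by
        gcongr with i hi
        exact h f hf1 hf2 i (Finset.mem_range.1 hi)
    _ = c := by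
        rw [Finset.sum_const, Finset.card_range, nsmul_eq_mul, ← mul_assoc,
          inv_mul_cancel₀ hm0.ne', one_mul]

lemma isProbabilityMeasure_of_markov {S : Type*} [MeasurableSpace S]
    {M : Measure (ℕ → S)} {μ : Measure S} {K : S → Measure S}
    (h : IsMarkovMeasureF M μ K) [IsProbabilityMeasure μ] :
    IsProbabilityMeasure M := by
  constructor
  have h1 : μ Set.univ = 1 := measure_univ
  rw [← h.1, Measure.map_apply (measurable_pi_apply 0) MeasurableSet.univ] at h1
  simpa using h1

lemma chain_stay {S : Type*} [MeasurableSpace S]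
    (M : Measure (ℕ → S)) (μ : Measure S) (K : S → Measure S)
    (hM : IsMarkovMeasureF M μ K) (C : Set S) (hC : MeasurableSet C)
    (q : ℝ≥0∞) (hq : ∀ x ∈ C, q ≤ K x C) :
    ∀ r : ℕ, q ^ r * μ C ≤ M {s | ∀ i ≤ r, s i ∈ C} := by
  intro r
  induction r with
  | zero =>
    have : {s : ℕ → S | ∀ i ≤ 0, s i ∈ C} = (fun s : ℕ → S => s 0) ⁻¹' C := by
      ext s; simp [Nat.le_zero]
    rw [this, pow_zero, one_mul, ← Measure.map_apply (measurable_pi_apply 0) hC, hM.1]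
  | succ r ih =>
    set B : Set (Fin (r + 1) → S) := Set.univ.pi fun _ => C with hB
    have hBm : MeasurableSet B := MeasurableSet.univ_pi fun _ => hC
    have key := hM.2 r B hBm C hC
    have hE2 : {s : ℕ → S | (fun i : Fin (r + 1) => s i.1) ∈ B}
        = {s : ℕ → S | ∀ i ≤ r, s i ∈ C} := by
      ext s
      simp [hB, Set.mem_pi, Fin.forall_iff, Nat.lt_succ_iff]
    have hE1 : {s : ℕ → S | (fun i : Fin (r + 1) => s i.1) ∈ B ∧ s (r + 1) ∈ C}
        = {s : ℕ → S | ∀ i ≤ r + 1, s i ∈ C} := by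
      ext s
      simp only [Set.mem_setOf_eq, hB, Set.mem_pi, Set.mem_univ, forall_const,
        Fin.forall_iff, Nat.lt_succ_iff]
      constructor
      · rintro ⟨h1, h2⟩ i hi
        rcases Nat.lt_succ_iff_lt_or_eq.1 (Nat.lt_succ_of_le hi) with h | h
        · exact h1 i (Nat.lt_succ_iff.1 h)
        · exact h ▸ h2
      · intro h
        exact ⟨fun i hi => h i (hi.trans (Nat.le_succ r)), h (r + 1) le_rfl⟩
    rw [hE2, hE1] at key
    have hSm : MeasurableSet {s : ℕ → S | ∀ i ≤ r, s i ∈ C} := by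
      have : {s : ℕ → S | ∀ i ≤ r, s i ∈ C} = ⋂ i ∈ Set.Iic r, (fun s : ℕ → S => s i) ⁻¹' C := by
        ext s; simp
      rw [this]
      exact MeasurableSet.biInter (Set.to_countable _) fun i _ =>
        (measurable_pi_apply i) hC
    calc q ^ (r + 1) * μ C = q * (q ^ r * μ C) := by ring
      _ ≤ q * M {s : ℕ → S | ∀ i ≤ r, s i ∈ C} := mul_le_mul_right ih q
      _ = ∫⁻ _ in {s : ℕ → S | ∀ i ≤ r, s i ∈ C}, q ∂M := by
          rw [setLIntegral_const]
      _ ≤ ∫⁻ s in {s : ℕ → S | ∀ i ≤ r, s i ∈ C}, K (s r) C ∂M := by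
          refine setLIntegral_mono' hSm fun s hs => hq (s r) (hs r le_rfl)
      _ = M {s : ℕ → S | ∀ i ≤ r + 1, s i ∈ C} := key.symm

/-- Let `Θ = ℝ^p` and let `𝓜_n = (M_n, id)` be the non-random Markov
chain Monte Carlo procedure where `M_n` is the Markov measure generated by the initial
distribution `μ_n` and the transition kernel
`K_n(x,dy) = A_n(x) R_n(x,dy) + (1 - A_n(x)) δ_x(dy)`.  If `(μ_n)` is tight and
`sup_{x ∈ K} A_n(x) → 0` for every compact `K`, then `(𝓜_n)` is degenerate. -/
theorem stmt1 {p : ℕ}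
    (μ : ℕ → Measure (EuclideanSpace ℝ (Fin p)))
    (hμ : ∀ n, IsProbabilityMeasure (μ n))
    (R : ℕ → Kernel (EuclideanSpace ℝ (Fin p)) (EuclideanSpace ℝ (Fin p)))
    (hR : ∀ n, IsMarkovKernel (R n))
    (A : ℕ → EuclideanSpace ℝ (Fin p) → ℝ)
    (hAmeas : ∀ n, Measurable (A n))
    (hA01 : ∀ n x, A n x ∈ Set.Ioo (0 : ℝ) 1)
    (K : ℕ → Kernel (EuclideanSpace ℝ (Fin p)) (EuclideanSpace ℝ (Fin p)))
    (hK : ∀ n, IsMarkovKernel (K n))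
    (hKdef : ∀ n x, (K n) x
      = ENNReal.ofReal (A n x) • (R n) x
        + ENNReal.ofReal (1 - A n x) • Measure.dirac x)
    (M : ℕ → Measure (ℕ → EuclideanSpace ℝ (Fin p)))
    (hMarkov : ∀ n, IsMarkovMeasureF (M n) (μ n) (fun x => (K n) x))
    (htight : TightSeq μ)
    (hAsup : ∀ Kc : Set (EuclideanSpace ℝ (Fin p)), IsCompact Kc →
      Tendsto (fun n => ⨆ x ∈ Kc, A n x) atTop (𝓝 0)) :
    ∀ m : ℕ, 1 ≤ m →
      Tendsto (fun n => ∫ s, blDist (empMeas m s) (empMeas 1 s) ∂(M n))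
        atTop (𝓝 0) := by
  intro m hm
  have hMp : ∀ n, IsProbabilityMeasure (M n) := fun n =>
    haveI := hμ n
    isProbabilityMeasure_of_markov (hMarkov n)
  rw [Metric.tendsto_atTop]
  intro δ hδ
  have hmpos : (0:ℝ) < m := by exact_mod_cast hm
  set ε' : ℝ := min (δ / (8 * m)) (1/2) with hε'def
  have hε'pos : 0 < ε' := lt_min (by positivity) (by norm_num)
  have hε'half : ε' ≤ 1/2 := min_le_right _ _
  obtain ⟨Kc, hKcomp, hKmass⟩ := htight ε' hε'pos
  have hKcm : MeasurableSet Kc := hKcomp.isClosed.measurableSet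
  obtain ⟨u, hu⟩ := TopologicalSpace.exists_dense_seq (EuclideanSpace ℝ (Fin p))
  set D : ℕ → Set (EuclideanSpace ℝ (Fin p)) :=
    fun k => Kc ∩ Metric.ball (u k) (δ/8) with hD
  set C : ℕ → Set (EuclideanSpace ℝ (Fin p)) := disjointed D with hCdef
  have hDm : ∀ k, MeasurableSet (D k) := fun k => hKcm.inter measurableSet_ball
  have hCm : ∀ k, MeasurableSet (C k) := MeasurableSet.disjointed hDm
  have hCsub : ∀ k, C k ⊆ D k := fun k => disjointed_subset _ _
  have hCdisj : Pairwise (Function.onFun Disjoint C) := disjoint_disjointed D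
  have hCun : ⋃ k, C k = Kc := by
    rw [hCdef, iUnion_disjointed]
    ext x
    simp only [Set.mem_iUnion, hD, Set.mem_inter_iff, Metric.mem_ball]
    constructor
    · rintro ⟨k, hk, _⟩; exact hk
    · intro hx
      obtain ⟨k, hk⟩ := hu.exists_dist_lt x (by positivity : (0:ℝ) < δ/8)
      exact ⟨k, hx, hk⟩
  set B : ℕ → Set (ℕ → EuclideanSpace ℝ (Fin p)) :=
    fun k => {s | ∀ i ≤ m - 1, s i ∈ C k} with hBdef
  have hBm : ∀ k, MeasurableSet (B k) := by
    intro k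
    have : B k = ⋂ i ∈ Set.Iic (m-1), (fun s : ℕ → EuclideanSpace ℝ (Fin p) => s i) ⁻¹' C k := by
      ext s; simp [hBdef]
    rw [this]
    exact MeasurableSet.biInter (Set.to_countable _) fun i _ => (measurable_pi_apply i) (hCm k)
  have hBdisj : Pairwise (Function.onFun Disjoint B) := by
    intro k j hkj
    refine Set.disjoint_left.2 fun s hsk hsj => ?_
    exact Set.disjoint_left.1 (hCdisj hkj) (hsk 0 (Nat.zero_le _)) (hsj 0 (Nat.zero_le _))
  set G := ⋃ k, B k with hGdef
  have hGm : MeasurableSet G := MeasurableSet.iUnion hBm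
  have hev := (hAsup Kc hKcomp).eventually (gt_mem_nhds hε'pos)
  obtain ⟨N, hN⟩ := eventually_atTop.1 hev
  refine ⟨N, fun n hn => ?_⟩
  haveI := hMp n
  haveI := hμ n
  have han : ∀ x ∈ Kc, A n x ≤ ε' := by
    intro x hx
    have hb : BddAbove (Set.range fun y => ⨆ _ : y ∈ Kc, A n y) := by
      refine ⟨1, ?_⟩
      rintro _ ⟨y, rfl⟩
      exact Real.iSup_le (fun _ => (hA01 n y).2.le) one_pos.le
    have h1 : A n x ≤ ⨆ y ∈ Kc, A n y := by
      have hc : A n x = ⨆ _ : x ∈ Kc, A n x := by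
        haveI : Nonempty (x ∈ Kc) := ⟨hx⟩
        exact (ciSup_const).symm
      rw [hc]
      exact le_ciSup hb x
    exact h1.trans (hN n hn).le
  set q : ℝ≥0∞ := ENNReal.ofReal (1 - ε') with hqdef
  have hstay : ∀ k, q ^ (m - 1) * μ n (C k) ≤ M n (B k) := by
    intro k
    refine chain_stay (M n) (μ n) (fun x => (K n) x) (hMarkov n) (C k) (hCm k) q ?_ (m - 1)
    intro x hxC
    have hxK : x ∈ Kc := ((hCsub k) hxC).1
    show q ≤ ((K n) x) (C k)
    rw [hKdef n x]
    have h2 : ENNReal.ofReal (1 - A n x) • Measure.dirac x (C k)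
        ≤ (ENNReal.ofReal (A n x) • (R n) x
            + ENNReal.ofReal (1 - A n x) • Measure.dirac x) (C k) := by
      rw [Measure.add_apply]; exact le_add_self
    refine le_trans ?_ h2
    rw [smul_eq_mul, Measure.dirac_apply' _ (hCm k),
      Set.indicator_of_mem hxC, Pi.one_apply, mul_one]
    exact ENNReal.ofReal_le_ofReal (by linarith [han x hxK])
  have hq1 : q = 1 - ENNReal.ofReal ε' := by
    rw [hqdef, ENNReal.ofReal_sub _ hε'pos.le, ENNReal.ofReal_one]
  have hμKc : q ≤ μ n Kc := by
    have h1 : (1:ℝ≥0∞) - ENNReal.ofReal ε' ≤ 1 - μ n Kcᶜ := tsub_le_tsub_left (hKmass n) 1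
    have h2 : (1:ℝ≥0∞) - μ n Kcᶜ ≤ μ n Kc := by
      rw [tsub_le_iff_right, ← measure_univ (μ := μ n), ← measure_add_measure_compl hKcm]
    rw [hq1]
    exact h1.trans h2
  have hGmass : q ^ m ≤ M n G := by
    have h1 : M n G = ∑' k, M n (B k) := measure_iUnion hBdisj hBm
    have h3 : ∑' k, q ^ (m-1) * μ n (C k) = q ^ (m-1) * μ n Kc := by
      rw [ENNReal.tsum_mul_left, ← measure_iUnion hCdisj hCm, hCun]
    have h4 : q ^ m = q ^ (m-1) * q := by
      rw [← pow_succ]; congr 1; omega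
    rw [h1]
    calc q ^ m = q ^ (m-1) * q := h4
      _ ≤ q ^ (m-1) * μ n Kc := mul_le_mul_right hμKc _
      _ = ∑' k, q ^ (m-1) * μ n (C k) := h3.symm
      _ ≤ ∑' k, M n (B k) := ENNReal.tsum_le_tsum hstay
  have hMGc : M n Gᶜ ≤ 1 - q ^ m := by
    rw [prob_compl_eq_one_sub hGm]
    exact tsub_le_tsub_left hGmass 1
  have hbl2 : ∀ s, blDist (empMeas m s) (empMeas 1 s)
      ≤ δ/4 + Set.indicator Gᶜ (fun _ => (2:ℝ)) s := by
    intro s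
    by_cases hs : s ∈ G
    · rw [Set.indicator_of_notMem (by simpa using hs), add_zero]
      obtain ⟨k, hk⟩ := Set.mem_iUnion.1 hs
      refine blDist_empMeas_le hm s (by positivity) ?_
      intro f hf1 _ i hi
      have hdist : dist (s i) (s 0) < δ/4 := by
        have h1 : s i ∈ Metric.ball (u k) (δ/8) := ((hCsub k) (hk i (by omega))).2
        have h0 : s 0 ∈ Metric.ball (u k) (δ/8) := ((hCsub k) (hk 0 (Nat.zero_le _))).2
        calc dist (s i) (s 0) ≤ dist (s i) (u k) + dist (u k) (s 0) := dist_triangle _ _ _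
          _ < δ/8 + δ/8 := add_lt_add (Metric.mem_ball.1 h1)
              (by rw [dist_comm]; exact Metric.mem_ball.1 h0)
          _ = δ/4 := by ring
      calc |f (s i) - f (s 0)| ≤ dist (s i) (s 0) := by
            have h := hf1.dist_le_mul (s i) (s 0)
            rwa [NNReal.coe_one, one_mul, Real.dist_eq] at h
        _ ≤ δ/4 := hdist.le
    · rw [Set.indicator_of_mem (by simpa using hs)]
      have h2 : blDist (empMeas m s) (empMeas 1 s) ≤ 2 := by
        refine blDist_empMeas_le hm s (by norm_num) ?_
        intro f _ hf2 i _
        calc |f (s i) - f (s 0)| ≤ |f (s i)| + |f (s 0)| := abs_sub _ _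
          _ ≤ 1 + 1 := add_le_add (hf2 _) (hf2 _)
          _ = 2 := by norm_num
      have : (0:ℝ) ≤ δ/4 := by positivity
      linarith
  have hint_le : ∫ s, blDist (empMeas m s) (empMeas 1 s) ∂(M n)
      ≤ δ/4 + 2 * (M n Gᶜ).toReal := by
    have hgint : Integrable (fun s => δ/4 + Set.indicator Gᶜ (fun _ => (2:ℝ)) s) (M n) :=
      (integrable_const _).add ((integrable_const (2:ℝ)).indicator hGm.compl)
    have h1 := integral_mono_of_nonneg
      (Filter.Eventually.of_forall fun s => blDist_nonneg _ _)
      hgint (Filter.Eventually.of_forall hbl2)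
    rw [integral_add (integrable_const _) ((integrable_const (2:ℝ)).indicator hGm.compl),
      integral_const, integral_indicator_const _ hGm.compl] at h1
    simpa [measure_univ, smul_eq_mul, mul_comm, Measure.real] using h1
  have htoReal : (M n Gᶜ).toReal ≤ m * ε' := by
    have hne : (1 : ℝ≥0∞) - q ^ m ≠ ⊤ := (tsub_le_self.trans_lt ENNReal.one_lt_top).ne
    have h1 : (M n Gᶜ).toReal ≤ (1 - q ^ m).toReal := ENNReal.toReal_mono hne hMGc
    have hqm : q ^ m = ENNReal.ofReal ((1 - ε') ^ m) := by
      rw [hqdef, ← ENNReal.ofReal_pow (by linarith)]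
    have hc1 : (1 - ε') ^ m ≤ 1 := pow_le_one₀ (by linarith) (by linarith)
    have h2 : (1:ℝ≥0∞) - q ^ m = ENNReal.ofReal (1 - (1 - ε') ^ m) := by
      rw [hqm, ENNReal.ofReal_sub _ (pow_nonneg (by linarith) m), ENNReal.ofReal_one]
    rw [h2, ENNReal.toReal_ofReal (by linarith)] at h1
    have hbern : 1 - (m:ℝ) * ε' ≤ (1 - ε') ^ m := by
      have h := one_add_mul_le_pow (show (-2:ℝ) ≤ -ε' by linarith) m
      rw [show (1 + -ε' : ℝ) = 1 - ε' by ring] at h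
      linarith
    linarith
  have hFnn : 0 ≤ ∫ s, blDist (empMeas m s) (empMeas 1 s) ∂(M n) :=
    integral_nonneg fun s => blDist_nonneg _ _
  have hε'm : (m:ℝ) * ε' ≤ δ/8 := by
    have h : ε' ≤ δ/(8*m) := min_le_left _ _
    calc (m:ℝ) * ε' ≤ m * (δ/(8*m)) := by
          exact mul_le_mul_of_nonneg_left h hmpos.le
      _ = δ/8 := by field_simp
  rw [Real.dist_eq, sub_zero, abs_of_nonneg hFnn]
  calc ∫ s, blDist (empMeas m s) (empMeas 1 s) ∂(M n)
      ≤ δ/4 + 2 * (M n Gᶜ).toReal := hint_le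
    _ ≤ δ/4 + 2 * (m * ε') := by linarith
    _ ≤ δ/4 + 2 * (δ/8) := by linarith
    _ < δ := by linarith
end
end

section
/- Under Assumption 1, the cumulative link model P(dxdy|θ)=p(xy|θ)ν(dxdy), with ν(dxdy)=P_X(dx)∑_{i=1}^c δ_i(dy) and p(xy|θ)=F(α^y+β^T x)−F(α^{y−1}+β^T x), is quadratic mean differentiable at every θ∈Θ. -/
open MeasureTheory ProbabilityTheory Filter Asymptotics
open scoped ENNReal Topology

noncomputable section

/-- Linear predictor `βᵀx`. -/
def linpred {p : ℕ} (β x : Fin p → ℝ) : ℝ := ∑ i, β i * x i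

/-- Extended cutoffs of the cumulative link model: `cutoff c α j = αʲ` for
`2 ≤ j ≤ c - 1` and `cutoff c α 1 = 0` (the dummy value `α¹ = 0`). -/
def cutoff (c : ℕ) (α : Fin (c - 2) → ℝ) (j : ℕ) : ℝ :=
  if h : 2 ≤ j ∧ j ≤ c - 1 then α ⟨j - 2, by omega⟩ else 0

/-- Cumulative probabilities `P(y ≤ j | x) = F(αʲ + βᵀx)` with the conventions
`α⁰ = -∞` and `α^c = +∞`. -/
def cumP (F : ℝ → ℝ) (p c : ℕ) (θ : (Fin (c - 2) → ℝ) × (Fin p → ℝ))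
    (x : Fin p → ℝ) (j : ℕ) : ℝ :=
  if j = 0 then 0 else if c ≤ j then 1 else F (cutoff c θ.1 j + linpred θ.2 x)

/-- Cell probabilities `p(x, y | θ) = F(α^y + βᵀx) - F(α^{y-1} + βᵀx)`; `y : Fin c`
encodes the category `y + 1 ∈ {1, …, c}`. -/
def cellP (F : ℝ → ℝ) (p c : ℕ) (θ : (Fin (c - 2) → ℝ) × (Fin p → ℝ))
    (x : Fin p → ℝ) (y : Fin c) : ℝ :=
  cumP F p c θ x (y.1 + 1) - cumP F p c θ x y.1

/-- Parameter space `Θ = {(α², …, α^{c-1}, β) : 0 < α² < ⋯ < α^{c-1}}`. -/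
def ParamSet (p c : ℕ) : Set ((Fin (c - 2) → ℝ) × (Fin p → ℝ)) :=
  {θ | StrictMono θ.1 ∧ ∀ i, 0 < θ.1 i}

/-- The dominating measure `ν(dx dy) = P_X(dx) ∑_{i=1}^c δ_i(dy)`. -/
def nuMeas {p : ℕ} (PX : Measure (Fin p → ℝ)) (c : ℕ) :
    Measure ((Fin p → ℝ) × Fin c) :=
  PX.prod Measure.count

/-- The law `P(dx dy | θ) = p(x, y | θ) ν(dx dy)` of one observation. -/
def modelP (F : ℝ → ℝ) {p : ℕ} (PX : Measure (Fin p → ℝ)) (c : ℕ)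
    (θ : (Fin (c - 2) → ℝ) × (Fin p → ℝ)) : Measure ((Fin p → ℝ) × Fin c) :=
  (nuMeas PX c).withDensity (fun z => ENNReal.ofReal (cellP F p c θ z.1 z.2))

/-- The law `P_n(dx_n dy_n | θ)` of `n` i.i.d. observations. -/
def modelPn (F : ℝ → ℝ) {p : ℕ} (PX : Measure (Fin p → ℝ)) (c n : ℕ)
    (θ : (Fin (c - 2) → ℝ) × (Fin p → ℝ)) :
    Measure (Fin n → (Fin p → ℝ) × Fin c) :=
  Measure.pi (fun _ => modelP F PX c θ)

/-- **Assumption 1** of the paper. -/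
structure Assm1 {p : ℕ} (F f : ℝ → ℝ) (PX : Measure (Fin p → ℝ)) : Prop where
  f_cont : Continuous f
  f_pos : ∀ x, 0 < f x
  F_eq : ∀ x, F x = ∫ y in Set.Iic x, f y
  F_cdf : Tendsto F atTop (𝓝 1)
  supp_compact : ∃ K : Set (Fin p → ℝ), IsCompact K ∧ PX Kᶜ = 0
  nondeg : ∀ (a : ℝ) (b : Fin p → ℝ),
    (∀ᵐ x ∂PX, a + linpred b x = 0) → a = 0 ∧ b = 0

section AuxQMD
open Set


variable {F f : ℝ → ℝ}

lemma f_intOn (hfc : Continuous f)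
    (hFeq : ∀ x, F x = ∫ y in Set.Iic x, f y)
    (hFt : Tendsto F atTop (𝓝 1)) : ∀ x : ℝ, IntegrableOn f (Set.Iic x) := by
  obtain ⟨x0, hx0⟩ : ∃ x0 : ℝ, 0 < F x0 := by
    have h := hFt.eventually (eventually_gt_nhds (by norm_num : (0:ℝ) < 1))
    exact h.exists
  have h0 : IntegrableOn f (Set.Iic x0) := by
    by_contra h
    rw [hFeq x0, integral_undef h] at hx0; exact lt_irrefl _ hx0
  intro x
  rcases le_total x x0 with h | h
  · exact h0.mono_set (Set.Iic_subset_Iic.2 h)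
  · rw [← Set.Iic_union_Ioc_eq_Iic h]
    exact h0.union (hfc.integrableOn_Ioc)

lemma F_hasDeriv (hfc : Continuous f)
    (hFeq : ∀ x, F x = ∫ y in Set.Iic x, f y)
    (hFt : Tendsto F atTop (𝓝 1)) : ∀ x : ℝ, HasDerivAt F (f x) x := by
  intro x₀
  have key : ∀ y : ℝ, x₀ - 1 < y → F y = F (x₀-1) + ∫ t in (x₀-1)..y, f t := by
    intro y hy
    rw [intervalIntegral.integral_of_le (by linarith), hFeq y, hFeq (x₀-1),
      ← setIntegral_union (Set.Iic_disjoint_Ioc le_rfl) measurableSet_Ioc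
        (f_intOn hfc hFeq hFt _) hfc.integrableOn_Ioc,
      Set.Iic_union_Ioc_eq_Iic (by linarith)]
  have hg : HasDerivAt (fun y => F (x₀-1) + ∫ t in (x₀-1)..y, f t) (f x₀) x₀ :=
    (intervalIntegral.integral_hasDerivAt_right (hfc.intervalIntegrable _ _)
      (hfc.stronglyMeasurableAtFilter _ _) hfc.continuousAt).const_add _
  apply hg.congr_of_eventuallyEq
  filter_upwards [eventually_gt_nhds (by linarith : x₀ - 1 < x₀)] with y hy
  exact key y hy

lemma F_strictMono (hfc : Continuous f) (hfp : ∀ x, 0 < f x)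
    (hFeq : ∀ x, F x = ∫ y in Set.Iic x, f y)
    (hFt : Tendsto F atTop (𝓝 1)) : StrictMono F := by
  intro a b hab
  have : F b = F a + ∫ t in a..b, f t := by
    rw [intervalIntegral.integral_of_le hab.le, hFeq a, hFeq b,
      ← setIntegral_union (Set.Iic_disjoint_Ioc le_rfl) measurableSet_Ioc
        (f_intOn hfc hFeq hFt _) hfc.integrableOn_Ioc,
      Set.Iic_union_Ioc_eq_Iic hab.le]
  rw [this]
  have := intervalIntegral.intervalIntegral_pos_of_pos (hfc.intervalIntegrable a b) hfp hab
  linarith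

lemma F_pos (hfc : Continuous f) (hfp : ∀ x, 0 < f x)
    (hFeq : ∀ x, F x = ∫ y in Set.Iic x, f y)
    (hFt : Tendsto F atTop (𝓝 1)) : ∀ x, 0 < F x := by
  intro x
  rw [hFeq x]
  rw [setIntegral_pos_iff_support_of_nonneg_ae
    (Filter.Eventually.of_forall (fun y => (hfp y).le)) (f_intOn hfc hFeq hFt x)]
  have : Function.support f = Set.univ := by
    ext y; simp [Function.support, (hfp y).ne']
  rw [this, Set.univ_inter, Real.volume_Iic]
  simp

lemma F_lt_one (hfc : Continuous f) (hfp : ∀ x, 0 < f x)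
    (hFeq : ∀ x, F x = ∫ y in Set.Iic x, f y)
    (hFt : Tendsto F atTop (𝓝 1)) : ∀ x, F x < 1 := by
  intro x
  have h1 : F (x+1) ≤ 1 := (F_strictMono hfc hfp hFeq hFt).monotone.ge_of_tendsto hFt (x+1)
  exact lt_of_lt_of_le (F_strictMono hfc hfp hFeq hFt (by linarith : x < x+1)) h1

-- NEW MATERIAL
variable {p c : ℕ}

/-- The pairing `h ↦ ∑ hᵢgᵢ` as a continuous linear map. -/
def pairCLM (p c : ℕ) (g : (Fin (c - 2) → ℝ) × (Fin p → ℝ)) :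
    ((Fin (c - 2) → ℝ) × (Fin p → ℝ)) →L[ℝ] ℝ :=
  (∑ i : Fin (c-2), g.1 i • ((ContinuousLinearMap.proj i).comp
      (ContinuousLinearMap.fst ℝ (Fin (c-2) → ℝ) (Fin p → ℝ))))
  + ∑ j : Fin p, g.2 j • ((ContinuousLinearMap.proj j).comp
      (ContinuousLinearMap.snd ℝ (Fin (c-2) → ℝ) (Fin p → ℝ)))

lemma pairCLM_apply (g h : (Fin (c - 2) → ℝ) × (Fin p → ℝ)) :
    pairCLM p c g h = ∑ i, h.1 i * g.1 i + ∑ j, h.2 j * g.2 j := by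
  simp [pairCLM, mul_comm]

lemma pairCLM_zero : pairCLM p c 0 = 0 := by
  refine ContinuousLinearMap.ext fun h => ?_
  simp [pairCLM_apply]

lemma pairCLM_sub (g g' : (Fin (c - 2) → ℝ) × (Fin p → ℝ)) :
    pairCLM p c (g - g') = pairCLM p c g - pairCLM p c g' := by
  refine ContinuousLinearMap.ext fun h => ?_
  simp only [pairCLM_apply, ContinuousLinearMap.sub_apply, Prod.fst_sub, Prod.snd_sub,
    Pi.sub_apply, mul_sub, Finset.sum_sub_distrib]
  ring

lemma pairCLM_smul (a : ℝ) (g : (Fin (c - 2) → ℝ) × (Fin p → ℝ)) :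
    pairCLM p c (a • g) = a • pairCLM p c g := by
  refine ContinuousLinearMap.ext fun h => ?_
  simp only [pairCLM_apply, ContinuousLinearMap.smul_apply, smul_eq_mul, Prod.smul_fst,
    Prod.smul_snd, Pi.smul_apply, mul_add, Finset.mul_sum]
  congr 1 <;> exact Finset.sum_congr rfl fun i _ => by ring

lemma pairCLM_opnorm (g : (Fin (c - 2) → ℝ) × (Fin p → ℝ)) :
    ‖pairCLM p c g‖ ≤ ((c - 2 : ℕ) + p : ℝ) * ‖g‖ := by
  refine ContinuousLinearMap.opNorm_le_bound _ (by positivity) fun h => ?_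
  rw [pairCLM_apply, Real.norm_eq_abs]
  calc |∑ i, h.1 i * g.1 i + ∑ j, h.2 j * g.2 j|
      ≤ ∑ i, |h.1 i * g.1 i| + ∑ j, |h.2 j * g.2 j| := by
        refine le_trans (abs_add_le _ _) ?_
        gcongr <;> exact Finset.abs_sum_le_sum_abs _ _
    _ ≤ ∑ _i : Fin (c-2), ‖g‖ * ‖h‖ + ∑ _j : Fin p, ‖g‖ * ‖h‖ := by
        gcongr with i _ j _
        · rw [abs_mul]
          exact mul_le_mul (le_trans (norm_le_pi_norm h.1 i) (norm_fst_le h))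
            (le_trans (norm_le_pi_norm g.1 i) (norm_fst_le g)) (abs_nonneg _) (norm_nonneg _)
            |>.trans_eq (mul_comm _ _)
        · rw [abs_mul]
          exact mul_le_mul (le_trans (norm_le_pi_norm h.2 j) (norm_snd_le h))
            (le_trans (norm_le_pi_norm g.2 j) (norm_snd_le g)) (abs_nonneg _) (norm_nonneg _)
            |>.trans_eq (mul_comm _ _)
    _ = ((c - 2 : ℕ) + p : ℝ) * ‖g‖ * ‖h‖ := by
        simp [Finset.sum_const, Finset.card_univ]; ring

/-- Direction vector for the cutoff part. -/
def valpha (c j : ℕ) : Fin (c - 2) → ℝ := fun i => if (i : ℕ) + 2 = j then 1 else 0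

lemma cutoff_eq (α : Fin (c-2) → ℝ) {j : ℕ} (hj1 : 1 ≤ j) (hj2 : j ≤ c - 1) :
    cutoff c α j = ∑ i, α i * valpha c j i := by
  unfold cutoff valpha
  by_cases h2 : 2 ≤ j
  · rw [dif_pos ⟨h2, hj2⟩,
      Finset.sum_eq_single (⟨j - 2, by omega⟩ : Fin (c - 2))]
    · simp [show j - 2 + 2 = j by omega]
    · intro b _ hb
      have : (b : ℕ) + 2 ≠ j := fun e => hb (by ext; simp; omega)
      simp [this]
    · simp
  · rw [dif_neg (by omega)]
    symm
    refine Finset.sum_eq_zero fun i _ => ?_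
    have : (i : ℕ) + 2 ≠ j := by omega
    simp [this]

lemma cumP_eq_F (F : ℝ → ℝ) (θ : (Fin (c - 2) → ℝ) × (Fin p → ℝ)) (x : Fin p → ℝ)
    {j : ℕ} (hj1 : 1 ≤ j) (hj2 : j ≤ c - 1) (hc : 2 ≤ c) :
    cumP F p c θ x j = F (pairCLM p c (valpha c j, x) θ) := by
  unfold cumP
  rw [if_neg (by omega), if_neg (by omega), pairCLM_apply, cutoff_eq θ.1 hj1 hj2]
  rfl

/-- Gradient of `θ ↦ cumP F p c θ x j`. -/
def cumD (f : ℝ → ℝ) (p c : ℕ) (θ : (Fin (c - 2) → ℝ) × (Fin p → ℝ)) (x : Fin p → ℝ)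
    (j : ℕ) : (Fin (c - 2) → ℝ) × (Fin p → ℝ) :=
  if 1 ≤ j ∧ j ≤ c - 1 then f (cutoff c θ.1 j + linpred θ.2 x) • (valpha c j, x) else 0

lemma hasFDerivAt_cumP {F f : ℝ → ℝ} (hF : ∀ x, HasDerivAt F (f x) x) (hc : 2 ≤ c)
    (θ : (Fin (c - 2) → ℝ) × (Fin p → ℝ)) (x : Fin p → ℝ) (j : ℕ) :
    HasFDerivAt (fun θ' => cumP F p c θ' x j) (pairCLM p c (cumD f p c θ x j)) θ := by
  rcases eq_or_ne j 0 with rfl | hj0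
  · have : (fun θ' => cumP F p c θ' x 0) = fun _ => (0:ℝ) := by
      funext θ'; simp [cumP]
    rw [this, cumD, if_neg (by omega), pairCLM_zero]
    exact hasFDerivAt_const _ _
  rcases le_or_gt c j with hcj | hcj
  · have : (fun θ' => cumP F p c θ' x j) = fun _ => (1:ℝ) := by
      funext θ'; simp [cumP, hj0, hcj]
    rw [this, cumD, if_neg (by omega), pairCLM_zero]
    exact hasFDerivAt_const _ _
  · have hj1 : 1 ≤ j := by omega
    have hj2 : j ≤ c - 1 := by omega
    have heq : (fun θ' => cumP F p c θ' x j)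
        = fun θ' => F (pairCLM p c (valpha c j, x) θ') := by
      funext θ'; exact cumP_eq_F F θ' x hj1 hj2 hc
    rw [heq, cumD, if_pos ⟨hj1, hj2⟩]
    have h1 : HasFDerivAt (fun θ' => pairCLM p c (valpha c j, x) θ')
        (pairCLM p c (valpha c j, x)) θ := (pairCLM p c (valpha c j, x)).hasFDerivAt
    have h2 := (hF (pairCLM p c (valpha c j, x) θ)).comp_hasFDerivAt θ h1
    have harg : pairCLM p c (valpha c j, x) θ = cutoff c θ.1 j + linpred θ.2 x := by
      rw [pairCLM_apply, cutoff_eq θ.1 hj1 hj2]; rfl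
    rw [harg] at h2
    rw [pairCLM_smul]
    exact h2

/-- Gradient of `θ ↦ cellP F p c θ x y`. -/
def cellD (f : ℝ → ℝ) (p c : ℕ) (θ : (Fin (c - 2) → ℝ) × (Fin p → ℝ)) (x : Fin p → ℝ)
    (y : Fin c) : (Fin (c - 2) → ℝ) × (Fin p → ℝ) :=
  cumD f p c θ x (y.1 + 1) - cumD f p c θ x y.1

lemma hasFDerivAt_cellP {F f : ℝ → ℝ} (hF : ∀ x, HasDerivAt F (f x) x) (hc : 2 ≤ c)
    (θ : (Fin (c - 2) → ℝ) × (Fin p → ℝ)) (x : Fin p → ℝ) (y : Fin c) :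
    HasFDerivAt (fun θ' => cellP F p c θ' x y) (pairCLM p c (cellD f p c θ x y)) θ := by
  rw [cellD, pairCLM_sub]
  exact (hasFDerivAt_cumP hF hc θ x (y.1+1)).sub (hasFDerivAt_cumP hF hc θ x y.1)

/-- Gradient of `θ ↦ √(cellP F p c θ x y)` — the score-type function `η`. -/
def etaFun (F f : ℝ → ℝ) (p c : ℕ) (θ : (Fin (c - 2) → ℝ) × (Fin p → ℝ)) (x : Fin p → ℝ)
    (y : Fin c) : (Fin (c - 2) → ℝ) × (Fin p → ℝ) :=
  (2 * Real.sqrt (cellP F p c θ x y))⁻¹ • cellD f p c θ x y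

lemma hasFDerivAt_sqrt_cellP {F f : ℝ → ℝ} (hF : ∀ x, HasDerivAt F (f x) x) (hc : 2 ≤ c)
    (θ : (Fin (c - 2) → ℝ) × (Fin p → ℝ)) (x : Fin p → ℝ) (y : Fin c)
    (hne : cellP F p c θ x y ≠ 0) :
    HasFDerivAt (fun θ' => Real.sqrt (cellP F p c θ' x y))
      (pairCLM p c (etaFun F f p c θ x y)) θ := by
  have h1 := (Real.hasDerivAt_sqrt hne).comp_hasFDerivAt θ (hasFDerivAt_cellP hF hc θ x y)
  rw [etaFun, pairCLM_smul, ← one_div]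
  exact h1

lemma cutoff_lt_cutoff {θ : (Fin (c - 2) → ℝ) × (Fin p → ℝ)} (hθ : θ ∈ ParamSet p c)
    {j : ℕ} (hj1 : 1 ≤ j) (hj2 : j + 1 ≤ c - 1) :
    cutoff c θ.1 j < cutoff c θ.1 (j + 1) := by
  obtain ⟨hsm, hpos⟩ := hθ
  unfold cutoff
  rcases eq_or_ne j 1 with rfl | hj
  · rw [dif_neg (by omega), dif_pos ⟨by omega, hj2⟩]
    exact hpos _
  · have h2 : 2 ≤ j := by omega
    rw [dif_pos ⟨h2, by omega⟩, dif_pos ⟨by omega, hj2⟩]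
    exact hsm (by simp [Fin.mk_lt_mk]; omega)

lemma cellP_pos {F : ℝ → ℝ} (hc : 2 ≤ c) (hFpos : ∀ x, 0 < F x) (hFlt : ∀ x, F x < 1)
    (hFmono : StrictMono F) {θ : (Fin (c - 2) → ℝ) × (Fin p → ℝ)} (hθ : θ ∈ ParamSet p c)
    (x : Fin p → ℝ) (y : Fin c) : 0 < cellP F p c θ x y := by
  have hj := y.2
  rw [cellP]
  rcases eq_or_ne (y.1 + 1) c with htranslate | htop
  · -- top category
    rw [cumP, if_neg (by omega), if_pos (by omega), cumP]
    rcases eq_or_ne y.1 0 with h0 | h0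
    · rw [if_pos h0]; norm_num
    · rw [if_neg h0, if_neg (by omega)]
      have := hFlt (cutoff c θ.1 y.1 + linpred θ.2 x); linarith
  · have hlt : y.1 + 1 ≤ c - 1 := by omega
    rcases eq_or_ne y.1 0 with h0 | h0
    · rw [cumP, cumP, if_pos h0, if_neg (by omega), if_neg (by omega)]
      have := hFpos (cutoff c θ.1 (y.1 + 1) + linpred θ.2 x); linarith
    · rw [cumP, cumP, if_neg h0, if_neg (by omega), if_neg (by omega), if_neg (by omega)]
      have hcut := cutoff_lt_cutoff hθ (by omega : 1 ≤ y.1) hlt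
      have := hFmono (by linarith : cutoff c θ.1 y.1 + linpred θ.2 x
        < cutoff c θ.1 (y.1 + 1) + linpred θ.2 x)
      linarith

lemma continuous_tArg (j : ℕ) :
    Continuous (fun q : ((Fin (c-2) → ℝ) × (Fin p → ℝ)) × (Fin p → ℝ) =>
      cutoff c q.1.1 j + linpred q.1.2 q.2) := by
  apply Continuous.add
  · unfold cutoff
    by_cases h : 2 ≤ j ∧ j ≤ c - 1
    · simp only [dif_pos h]
      exact (continuous_apply _).comp (continuous_fst.comp continuous_fst)
    · simp only [dif_neg h]; exact continuous_const
  · unfold linpred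
    exact continuous_finset_sum _ fun i _ =>
      ((continuous_apply i).comp (continuous_snd.comp continuous_fst)).mul
        ((continuous_apply i).comp continuous_snd)

lemma continuous_cellP {F : ℝ → ℝ} (hFc : Continuous F) (y : Fin c) :
    Continuous (fun q : ((Fin (c-2) → ℝ) × (Fin p → ℝ)) × (Fin p → ℝ) =>
      cellP F p c q.1 q.2 y) := by
  have key : ∀ j : ℕ, Continuous (fun q : ((Fin (c-2) → ℝ) × (Fin p → ℝ)) × (Fin p → ℝ) =>
      cumP F p c q.1 q.2 j) := by
    intro j
    unfold cumP
    rcases eq_or_ne j 0 with rfl | hj0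
    · simp only [if_pos rfl]; exact continuous_const
    rcases le_or_gt c j with hcj | hcj
    · simp only [if_neg hj0, if_pos hcj]; exact continuous_const
    · simp only [if_neg hj0, if_neg (by omega : ¬ c ≤ j)]
      exact hFc.comp (continuous_tArg j)
  exact (key (y.1 + 1)).sub (key y.1)

lemma continuous_cellD {f : ℝ → ℝ} (hfc : Continuous f) (y : Fin c) :
    Continuous (fun q : ((Fin (c-2) → ℝ) × (Fin p → ℝ)) × (Fin p → ℝ) =>
      cellD f p c q.1 q.2 y) := by
  have key : ∀ j : ℕ, Continuous (fun q : ((Fin (c-2) → ℝ) × (Fin p → ℝ)) × (Fin p → ℝ) =>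
      cumD f p c q.1 q.2 j) := by
    intro j
    unfold cumD
    by_cases h : 1 ≤ j ∧ j ≤ c - 1
    · simp only [if_pos h]
      exact (hfc.comp (continuous_tArg j)).smul (continuous_const.prodMk continuous_snd)
    · simp only [if_neg h]; exact continuous_const
  exact (key (y.1 + 1)).sub (key y.1)

lemma continuousOn_etaFun {F f : ℝ → ℝ} (hFc : Continuous F) (hfc : Continuous f) (y : Fin c)
    {S : Set (((Fin (c-2) → ℝ) × (Fin p → ℝ)) × (Fin p → ℝ))}
    (hS : ∀ q ∈ S, 0 < cellP F p c q.1 q.2 y) :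
    ContinuousOn (fun q => etaFun F f p c q.1 q.2 y) S := by
  unfold etaFun
  apply ContinuousOn.fun_smul
  · apply ContinuousOn.inv₀
    · exact (continuous_const.mul
        (Real.continuous_sqrt.comp (continuous_cellP hFc y))).continuousOn
    · intro q hq
      exact mul_ne_zero two_ne_zero (Real.sqrt_ne_zero'.mpr (hS q hq))
  · exact (continuous_cellD hfc y).continuousOn

lemma continuous_etaFun_x {F f : ℝ → ℝ} (hFc : Continuous F) (hfc : Continuous f)
    (hc : 2 ≤ c) (hFpos : ∀ x, 0 < F x) (hFlt : ∀ x, F x < 1) (hFmono : StrictMono F)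
    {θ : (Fin (c - 2) → ℝ) × (Fin p → ℝ)} (hθ : θ ∈ ParamSet p c) (y : Fin c) :
    Continuous (fun x => etaFun F f p c θ x y) := by
  have h := continuousOn_etaFun (p := p) hFc hfc y
    (S := {θ} ×ˢ Set.univ) (fun q hq => by
      rw [Set.mem_prod, Set.mem_singleton_iff] at hq
      rw [hq.1]
      exact cellP_pos hc hFpos hFlt hFmono hθ q.2 y)
  have : Continuous ((fun q : ((Fin (c-2) → ℝ) × (Fin p → ℝ)) × (Fin p → ℝ) =>
      etaFun F f p c q.1 q.2 y) ∘ (fun x => (θ, x))) :=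
    h.comp_continuous (continuous_const.prodMk continuous_id) (fun x => by simp)
  exact this

lemma isOpen_paramSet : IsOpen (ParamSet p c) := by
  rw [isOpen_iff_mem_nhds]
  intro θ hθ
  have h1 : ∀ᶠ θ' in 𝓝 θ, ∀ i : Fin (c-2), 0 < θ'.1 i := by
    rw [eventually_all]
    intro i
    exact (((continuous_apply i).comp continuous_fst).tendsto θ).eventually
      (eventually_gt_nhds (hθ.2 i))
  have h2 : ∀ᶠ θ' in 𝓝 θ, ∀ i j : Fin (c-2), i < j → θ'.1 i < θ'.1 j := by
    rw [eventually_all]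
    intro i
    rw [eventually_all]
    intro j
    by_cases hij : i < j
    · have := Filter.Tendsto.eventually_lt
        (((continuous_apply i).comp continuous_fst).tendsto θ)
        (((continuous_apply j).comp continuous_fst).tendsto θ) (hθ.1 hij)
      exact this.mono fun θ' hθ' _ => hθ'
    · exact Filter.Eventually.of_forall fun θ' h' => absurd h' hij
  filter_upwards [h1, h2] with θ' ha hb
  exact ⟨fun i j hij => hb i j hij, ha⟩

lemma key_eventually {F f : ℝ → ℝ} (hc : 2 ≤ c)
    (hFc : Continuous F) (hfc : Continuous f) (hF : ∀ x, HasDerivAt F (f x) x)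
    (hFpos : ∀ x, 0 < F x) (hFlt : ∀ x, F x < 1) (hFmono : StrictMono F)
    {θ : (Fin (c - 2) → ℝ) × (Fin p → ℝ)} (hθ : θ ∈ ParamSet p c)
    {r : ℝ} (hr : 0 < r) (hball : Metric.closedBall θ r ⊆ ParamSet p c)
    {K : Set (Fin p → ℝ)} (hK : IsCompact K)
    {ε : ℝ} (hε : 0 < ε) :
    ∀ᶠ h in 𝓝 (0 : (Fin (c - 2) → ℝ) × (Fin p → ℝ)), ∀ y : Fin c, ∀ x ∈ K,
      |Real.sqrt (cellP F p c (θ + h) x y) - Real.sqrt (cellP F p c θ x y)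
        - pairCLM p c (etaFun F f p c θ x y) h| ≤ ε * ‖h‖ := by
  rw [eventually_all]
  intro y
  set N : ℝ := ((c - 2 : ℕ) + p : ℝ) + 1 with hN
  have hNpos : 0 < N := by positivity
  have hScomp : IsCompact (Metric.closedBall θ r ×ˢ K) :=
    (isCompact_closedBall θ r).prod hK
  have hGcont : ContinuousOn (fun q => etaFun F f p c q.1 q.2 y)
      (Metric.closedBall θ r ×ˢ K) :=
    continuousOn_etaFun hFc hfc y (fun q hq =>
      cellP_pos hc hFpos hFlt hFmono (hball hq.1) q.2 y)
  have hUC := hScomp.uniformContinuousOn_of_continuous hGcont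
  rw [Metric.uniformContinuousOn_iff] at hUC
  obtain ⟨δ, hδ, hUC⟩ := hUC (ε / N) (by positivity)
  filter_upwards [Metric.ball_mem_nhds (0 : (Fin (c - 2) → ℝ) × (Fin p → ℝ))
    (lt_min hδ hr)] with h hh x hx
  rw [mem_ball_zero_iff] at hh
  have hhr : ‖h‖ ≤ r := le_of_lt (lt_of_lt_of_le hh (min_le_right _ _))
  have hhδ : ‖h‖ < δ := lt_of_lt_of_le hh (min_le_left _ _)
  have hsub : Metric.closedBall θ ‖h‖ ⊆ Metric.closedBall θ r :=
    Metric.closedBall_subset_closedBall hhr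
  have hderiv : ∀ θ' ∈ Metric.closedBall θ ‖h‖,
      HasFDerivWithinAt (fun θ'' => Real.sqrt (cellP F p c θ'' x y))
      (pairCLM p c (etaFun F f p c θ' x y)) (Metric.closedBall θ ‖h‖) θ' := fun θ' hθ' =>
    (hasFDerivAt_sqrt_cellP hF hc θ' x y
      (ne_of_gt (cellP_pos hc hFpos hFlt hFmono (hball (hsub hθ')) x y))).hasFDerivWithinAt
  have hbound : ∀ θ' ∈ Metric.closedBall θ ‖h‖,
      ‖pairCLM p c (etaFun F f p c θ' x y)
        - pairCLM p c (etaFun F f p c θ x y)‖ ≤ ε := by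
    intro θ' hθ'
    rw [← pairCLM_sub]
    refine le_trans (pairCLM_opnorm _) ?_
    have hdist : dist (θ', x) (θ, x) < δ := by
      rw [Prod.dist_eq, dist_self, max_eq_left dist_nonneg]
      exact lt_of_le_of_lt (Metric.mem_closedBall.1 hθ') hhδ
    have hd := hUC (θ', x) ⟨hsub hθ', hx⟩ (θ, x) ⟨Metric.mem_closedBall_self hr.le, hx⟩ hdist
    rw [dist_eq_norm] at hd
    calc ((c - 2 : ℕ) + p : ℝ) * ‖etaFun F f p c θ' x y - etaFun F f p c θ x y‖
        ≤ N * (ε / N) := by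
          apply mul_le_mul (by rw [hN]; linarith) hd.le (norm_nonneg _) hNpos.le
      _ = ε := mul_div_cancel₀ ε hNpos.ne'
  have hmem1 : θ ∈ Metric.closedBall θ ‖h‖ := Metric.mem_closedBall_self (norm_nonneg h)
  have hmem2 : θ + h ∈ Metric.closedBall θ ‖h‖ := by
    rw [Metric.mem_closedBall, dist_eq_norm, add_sub_cancel_left]
  have hmvt := (convex_closedBall θ ‖h‖).norm_image_sub_le_of_norm_hasFDerivWithin_le'
    hderiv hbound hmem1 hmem2
  rw [add_sub_cancel_left] at hmvt
  simpa using hmvt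

end AuxQMD

/-- Proposition: quadratic mean differentiability.
Under Assumption 1, the cumulative link model `P(dx dy|θ) = p(x y|θ) ν(dx dy)` is
quadratic mean differentiable at every `θ ∈ Θ`: there is a measurable `η(· |θ)` with
`∫ |√p(·|θ+h) - √p(·|θ) - hᵀη(·|θ)|² dν = o(|h|²)` as `h → 0`. -/
theorem stmt8 {p c : ℕ} (hc : 2 ≤ c) (F f : ℝ → ℝ)
    (PX : Measure (Fin p → ℝ)) [IsProbabilityMeasure PX]
    (hA : Assm1 F f PX) :
    ∀ θ ∈ ParamSet p c,
      ∃ η : ((Fin p → ℝ) × Fin c) → ((Fin (c - 2) → ℝ) × (Fin p → ℝ)),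
        Measurable η ∧
        (fun h : (Fin (c - 2) → ℝ) × (Fin p → ℝ) =>
            ∫ z, (Real.sqrt (cellP F p c (θ + h) z.1 z.2)
                  - Real.sqrt (cellP F p c θ z.1 z.2)
                  - (∑ i, h.1 i * (η z).1 i + ∑ j, h.2 j * (η z).2 j)) ^ 2
              ∂(nuMeas PX c))
          =o[𝓝 0] (fun h => ‖h‖ ^ 2) := by
  intro θ hθ
  -- Facts about F
  have hfc := hA.f_cont
  have hfp := hA.f_pos
  have hFeq := hA.F_eq
  have hFt := hA.F_cdf
  have hF : ∀ x, HasDerivAt F (f x) x := F_hasDeriv hfc hFeq hFt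
  have hFc : Continuous F := continuous_iff_continuousAt.mpr fun x => (hF x).continuousAt
  have hFmono : StrictMono F := F_strictMono hfc hfp hFeq hFt
  have hFpos : ∀ x, 0 < F x := F_pos hfc hfp hFeq hFt
  have hFlt : ∀ x, F x < 1 := F_lt_one hfc hfp hFeq hFt
  -- radius inside the parameter set
  obtain ⟨r0, hr0, hball0⟩ := Metric.mem_nhds_iff.1 (isOpen_paramSet.mem_nhds hθ)
  set r : ℝ := r0 / 2 with hrdef
  have hr : 0 < r := by positivity
  have hball : Metric.closedBall θ r ⊆ ParamSet p c :=
    subset_trans (Metric.closedBall_subset_ball (by rw [hrdef]; linarith)) hball0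
  -- compact support
  obtain ⟨K, hK, hKc⟩ := hA.supp_compact
  -- the candidate η and its measurability
  refine ⟨fun z => etaFun F f p c θ z.1 z.2, ?_, ?_⟩
  · exact measurable_from_prod_countable_left fun y =>
      (continuous_etaFun_x hFc hfc hc hFpos hFlt hFmono hθ y).measurable
  -- measure-theoretic setup
  have hνuniv : nuMeas PX c Set.univ = (c : ℝ≥0∞) := by
    rw [nuMeas, ← Set.univ_prod_univ, Measure.prod_prod, measure_univ, one_mul,
      Measure.count_univ]
    simp
  have hνnull : nuMeas PX c {z : (Fin p → ℝ) × Fin c | z.1 ∉ K} = 0 := by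
    have : {z : (Fin p → ℝ) × Fin c | z.1 ∉ K} = Kᶜ ×ˢ Set.univ := by
      ext z; simp
    rw [this, nuMeas, Measure.prod_prod, hKc, zero_mul]
  have hae : ∀ᵐ z ∂(nuMeas PX c), z.1 ∈ K := by
    rw [ae_iff]; exact hνnull
  haveI : IsFiniteMeasure (nuMeas PX c) := by
    constructor; rw [hνuniv]; exact ENNReal.natCast_lt_top c
  -- little-o
  rw [isLittleO_iff]
  intro ε hε
  have hcR : (0:ℝ) < c := by exact_mod_cast lt_of_lt_of_le (by norm_num) hc
  set εy : ℝ := Real.sqrt (ε / c) with hεy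
  have hεypos : 0 < εy := Real.sqrt_pos.2 (by positivity)
  filter_upwards [key_eventually hc hFc hfc hF hFpos hFlt hFmono hθ hr hball hK hεypos]
    with h hh
  -- the remainder function
  set R : ((Fin p → ℝ) × Fin c) → ℝ := fun z =>
    Real.sqrt (cellP F p c (θ + h) z.1 z.2) - Real.sqrt (cellP F p c θ z.1 z.2)
      - (∑ i, h.1 i * (etaFun F f p c θ z.1 z.2).1 i
          + ∑ j, h.2 j * (etaFun F f p c θ z.1 z.2).2 j) with hR
  have hRmeas : Measurable R := by
    apply Measurable.sub
    · apply Measurable.sub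
      · exact measurable_from_prod_countable_left fun y =>
          (Real.continuous_sqrt.comp ((continuous_cellP hFc y).comp
            (continuous_const.prodMk continuous_id))).measurable
      · exact measurable_from_prod_countable_left fun y =>
          (Real.continuous_sqrt.comp ((continuous_cellP hFc y).comp
            (continuous_const.prodMk continuous_id))).measurable
    · have hηm : Measurable (fun z : (Fin p → ℝ) × Fin c => etaFun F f p c θ z.1 z.2) :=
        measurable_from_prod_countable_left fun y =>
          (continuous_etaFun_x hFc hfc hc hFpos hFlt hFmono hθ y).measurable
      apply Measurable.add
      · exact Finset.measurable_sum _ fun i _ =>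
          ((measurable_pi_apply i).comp (measurable_fst.comp hηm)).const_mul _
      · exact Finset.measurable_sum _ fun j _ =>
          ((measurable_pi_apply j).comp (measurable_snd.comp hηm)).const_mul _
  have hpt : ∀ᵐ z ∂(nuMeas PX c), R z ^ 2 ≤ (εy * ‖h‖) ^ 2 := by
    filter_upwards [hae] with z hz
    have hb := hh z.2 z.1 hz
    have hRz : |R z| ≤ εy * ‖h‖ := by
      rw [hR]
      simpa [pairCLM_apply] using hb
    calc R z ^ 2 = |R z| ^ 2 := (sq_abs _).symm
      _ ≤ (εy * ‖h‖) ^ 2 := by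
          apply pow_le_pow_left₀ (abs_nonneg _) hRz
  have hint : Integrable (fun z => R z ^ 2) (nuMeas PX c) := by
    refine (integrable_const ((εy * ‖h‖) ^ 2)).mono'
      ((hRmeas.pow_const 2).aestronglyMeasurable) ?_
    filter_upwards [hpt] with z hz
    rwa [Real.norm_eq_abs, abs_of_nonneg (sq_nonneg _)]
  have hcalc : ∫ z, R z ^ 2 ∂(nuMeas PX c) ≤ ε * ‖h‖ ^ 2 := by
    calc ∫ z, R z ^ 2 ∂(nuMeas PX c)
        ≤ ∫ _z, (εy * ‖h‖) ^ 2 ∂(nuMeas PX c) :=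
          integral_mono_ae hint (integrable_const _) hpt
      _ = ((nuMeas PX c) Set.univ).toReal * (εy * ‖h‖) ^ 2 := by
          rw [integral_const, smul_eq_mul]; rfl
      _ = (c : ℝ) * ((ε / c) * ‖h‖ ^ 2) := by
          rw [hνuniv, mul_pow, hεy, Real.sq_sqrt (by positivity)]
          rw [ENNReal.toReal_natCast]
      _ = ε * ‖h‖ ^ 2 := by field_simp
  have hnn : 0 ≤ ∫ z, R z ^ 2 ∂(nuMeas PX c) := integral_nonneg fun z => sq_nonneg _
  rw [Real.norm_eq_abs, Real.norm_eq_abs, abs_of_nonneg hnn,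
    abs_of_nonneg (sq_nonneg (‖h‖))]
  exact hcalc
end
end
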